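/- Let Z be a real Hilbert space and let T, A : Z → Z be bounded linear operators. Suppose there exist ε > 0 and a bounded self-adjoint coercive linear operator P : Z → Z (i.e., there exists α > 0 with ⟨x, P x⟩ ≥ α‖x‖² for all x ∈ Z) such that ⟨x, (T P A* + A P T*) x⟩ ≤ −ε ‖T* x‖² for all x ∈ Z. Then every differentiable y : [0,∞) → Z satisfying T* y'(t) = A* y(t) for all t ≥ 0 satisfies ‖T* y(t)‖ → 0 as t → ∞; moreover there exist M > 0 and k > 0 such that ⟨T* y(t), P T* y(t)⟩ ≤ M e^{−kt} ⟨T* y(0), P T* y(0)⟩ for all t ≥ 0. -/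

import Mathlib

open MeasureTheory Filter Topology ContinuousLinearMap
open scoped RealInnerProductSpace

/-- Intermediate conclusion in the proof of the Dual LPI for Stability
(Theorem 13): under the dual operator inequality, the dual PIE `T* ẏ = A* y`
is asymptotically stable, and the Lyapunov function decays exponentially. -/
theorem dual_LPI_dual_trajectory_stability
    {Z : Type*} [NormedAddCommGroup Z] [InnerProductSpace ℝ Z] [CompleteSpace Z]
    (T A : Z →L[ℝ] Z) (ε : ℝ) (hε : 0 < ε)
    (P : Z →L[ℝ] Z) (hPsa : IsSelfAdjoint P)
    (hPcoer : ∃ α > (0:ℝ), ∀ x : Z, α * ‖x‖^2 ≤ ⟪x, P x⟫)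
    (hLPI : ∀ x : Z,
      ⟪x, (T.comp (P.comp (adjoint A)) + A.comp (P.comp (adjoint T))) x⟫
        ≤ -ε * ‖(adjoint T) x‖^2) :
    ∀ y : ℝ → Z,
      (∀ t ∈ Set.Ici (0:ℝ), DifferentiableAt ℝ y t) →
      (∀ t ∈ Set.Ici (0:ℝ), (adjoint T) (deriv y t) = (adjoint A) (y t)) →
      Tendsto (fun t => ‖(adjoint T) (y t)‖) atTop (𝓝 0) ∧
      ∃ M > (0:ℝ), ∃ k > (0:ℝ), ∀ t ∈ Set.Ici (0:ℝ),
        ⟪(adjoint T) (y t), P ((adjoint T) (y t))⟫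
          ≤ M * Real.exp (-k * t) * ⟪(adjoint T) (y 0), P ((adjoint T) (y 0))⟫ := by
  intro y hdiff heq
  obtain ⟨α, hα, hcoer⟩ := hPcoer
  set z : ℝ → Z := fun t => (adjoint T) (y t) with hz_def
  set g : ℝ → ℝ := fun t => ⟪z t, P (z t)⟫ with hg_def
  have hP1 : (0:ℝ) < ‖P‖ + 1 := by positivity
  set k : ℝ := ε / (‖P‖ + 1) with hk_def
  have hk : 0 < k := div_pos hε hP1
  -- derivative of z on [0,∞)
  have hz : ∀ t ∈ Set.Ici (0:ℝ), HasDerivAt z ((adjoint A) (y t)) t := by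
    intro t ht
    have hy := (hdiff t ht).hasDerivAt
    have h1 : HasDerivAt (fun s => (adjoint T) (y s)) ((adjoint T) (deriv y t)) t :=
      ((adjoint T).hasFDerivAt.comp_hasDerivAt t hy)
    rw [heq t ht] at h1
    exact h1
  -- derivative of g on [0,∞)
  have hg : ∀ t ∈ Set.Ici (0:ℝ), HasDerivAt g
      (⟪z t, P ((adjoint A) (y t))⟫ + ⟪(adjoint A) (y t), P (z t)⟫) t := by
    intro t ht
    have hPz : HasDerivAt (fun s => P (z s)) (P ((adjoint A) (y t))) t :=
      P.hasFDerivAt.comp_hasDerivAt t (hz t ht)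
    exact HasDerivAt.inner ℝ (hz t ht) hPz
  -- the LPI gives the Lyapunov derivative bound
  have hbound : ∀ t : ℝ,
      ⟪z t, P ((adjoint A) (y t))⟫ + ⟪(adjoint A) (y t), P (z t)⟫ ≤ -ε * ‖z t‖^2 := by
    intro t
    have h0 := hLPI (y t)
    simp only [ContinuousLinearMap.add_apply, ContinuousLinearMap.comp_apply,
      inner_add_right] at h0
    rw [← ContinuousLinearMap.adjoint_inner_left T (P ((adjoint A) (y t))) (y t),
      ← ContinuousLinearMap.adjoint_inner_left A (P ((adjoint T) (y t))) (y t)] at h0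
    exact h0
  -- pointwise bounds on g
  have hg_lower : ∀ t : ℝ, α * ‖z t‖^2 ≤ g t := fun t => hcoer (z t)
  have hg_nonneg : ∀ t : ℝ, 0 ≤ g t := fun t => le_trans (by positivity) (hg_lower t)
  have hg_upper : ∀ t : ℝ, g t ≤ ‖P‖ * ‖z t‖^2 := by
    intro t
    calc g t ≤ ‖z t‖ * ‖P (z t)‖ := real_inner_le_norm _ _
      _ ≤ ‖z t‖ * (‖P‖ * ‖z t‖) := by
          gcongr; exact P.le_opNorm _
      _ = ‖P‖ * ‖z t‖^2 := by ring
  have hkg : ∀ t : ℝ, k * g t ≤ ε * ‖z t‖^2 := by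
    intro t
    have h1 := hg_upper t
    have h2 : 0 ≤ ‖z t‖^2 := by positivity
    rw [hk_def, div_mul_eq_mul_div, div_le_iff₀ hP1]
    nlinarith [hg_nonneg t]
  -- the auxiliary function W = exp(kt) * g t is antitone on [0,∞)
  set W : ℝ → ℝ := fun t => Real.exp (k * t) * g t with hW_def
  have hW : ∀ t ∈ Set.Ici (0:ℝ), HasDerivAt W
      (Real.exp (k * t) * k * g t +
        Real.exp (k * t) * (⟪z t, P ((adjoint A) (y t))⟫ + ⟪(adjoint A) (y t), P (z t)⟫)) t := by
    intro t ht
    have h := (((hasDerivAt_id t).const_mul k).exp).mul (hg t ht)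
    simp only [id, mul_one] at h
    exact h
  have hant : AntitoneOn W (Set.Ici (0:ℝ)) := by
    apply antitoneOn_of_deriv_nonpos (convex_Ici 0)
    · intro t ht
      exact ((hW t ht).continuousAt).continuousWithinAt
    · intro t ht
      rw [interior_Ici] at ht
      exact (hW t (Set.mem_Ici.mpr (le_of_lt (Set.mem_Ioi.mp ht)))).differentiableAt.differentiableWithinAt
    · intro t ht
      rw [interior_Ici] at ht
      rw [(hW t (Set.mem_Ici.mpr (le_of_lt (Set.mem_Ioi.mp ht)))).deriv]
      have h1 := hbound t
      have h2 := hkg t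
      have h3 : (0:ℝ) < Real.exp (k * t) := Real.exp_pos _
      nlinarith
  -- exponential decay of g
  have hdecay : ∀ t ∈ Set.Ici (0:ℝ), g t ≤ Real.exp (-k * t) * g 0 := by
    intro t ht
    have h1 : W t ≤ W 0 := hant (Set.self_mem_Ici) ht ht
    have h2 : W 0 = g 0 := by simp [hW_def]
    have h3 : (0:ℝ) < Real.exp (k * t) := Real.exp_pos _
    rw [h2] at h1
    have : g t = Real.exp (-k * t) * W t := by
      rw [hW_def]
      rw [← mul_assoc, ← Real.exp_add]
      ring_nf
      simp
    rw [this]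
    have h4 : (0:ℝ) < Real.exp (-k * t) := Real.exp_pos _
    nlinarith
  constructor
  · -- convergence of ‖z t‖ to 0
    have hub : ∀ t ∈ Set.Ici (0:ℝ), ‖z t‖ ≤ Real.sqrt (Real.exp (-k * t) * (g 0 / α)) := by
      intro t ht
      rw [show ‖z t‖ = Real.sqrt (‖z t‖^2) by rw [Real.sqrt_sq (norm_nonneg _)]]
      apply Real.sqrt_le_sqrt
      have h1 := hg_lower t
      have h2 := hdecay t ht
      rw [mul_div_assoc'] at *
      rw [le_div_iff₀ hα]
      nlinarith
    have hlim : Tendsto (fun t => Real.sqrt (Real.exp (-k * t) * (g 0 / α))) atTop (𝓝 0) := by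
      have h1 : Tendsto (fun t : ℝ => Real.exp (-k * t)) atTop (𝓝 0) := by
        have h2 : Tendsto (fun t : ℝ => k * t) atTop atTop :=
          (tendsto_id (α := ℝ)).const_mul_atTop hk
        have h4 := Real.tendsto_exp_neg_atTop_nhds_zero.comp h2
        simpa [Function.comp_def, neg_mul] using h4
      have h3 : Tendsto (fun t : ℝ => Real.exp (-k * t) * (g 0 / α)) atTop (𝓝 0) := by
        simpa using h1.mul_const (g 0 / α)
      have := (Real.continuous_sqrt.tendsto 0).comp h3
      simpa [Function.comp_def] using this
    apply squeeze_zero' (Eventually.of_forall fun t => norm_nonneg _) _ hlim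
    filter_upwards [eventually_ge_atTop (0:ℝ)] with t ht
    exact hub t ht
  · -- the exponential bound with M = 1
    exact ⟨1, one_pos, k, hk, fun t ht => by
      simpa using hdecay t ht⟩
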